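/- Let A be a stochastic m×m matrix and B a stochastic m×m matrix, i an index, and J a set of indices. There do NOT exist such A, B, i, J with the property that for all n ≥ 0, the sum over j ∈ J of (AⁿB)_{i,j} equals (1/2)·1/(1 − 1/2^{n+1}). -/

import Mathlib

open Finset Polynomial Filter

noncomputable def hseq (n : ℕ) : ℝ := (1/2) * (1 / (2^(n+1) - 1))

lemma two_pow_big (n : ℕ) : (2:ℝ) ≤ 2^(n+1) := by
  calc (2:ℝ) = 2^1 := by norm_num
  _ ≤ 2^(n+1) := by
    apply pow_le_pow_right₀ (by norm_num) (by omega)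

lemma denom_pos (n : ℕ) : (0:ℝ) < 2^(n+1) - 1 := by linarith [two_pow_big n]

lemma hseq_key (n : ℕ) : (2:ℝ)^(n+1) * hseq n = 1/2 + hseq n := by
  have h := denom_pos n
  unfold hseq
  field_simp
  ring

lemma g_eq (n : ℕ) : (1/2 : ℝ) * (1 / (1 - 1/2^(n+1))) = 1/2 + hseq n := by
  have h := denom_pos n
  have h2 : (0:ℝ) < 2^(n+1) := by linarith
  have h3 : (1:ℝ) - 1/2^(n+1) ≠ 0 := by
    have : (1:ℝ)/2^(n+1) < 1 := by
      rw [div_lt_one h2]; linarith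
    linarith
  unfold hseq
  field_simp
  ring

lemma hseq_tendsto : Tendsto hseq atTop (nhds 0) := by
  have h1 : Tendsto (fun n : ℕ => (2:ℝ)^(n+1) - 1) atTop atTop := by
    apply Filter.tendsto_atTop_add_const_right
    exact (tendsto_pow_atTop_atTop_of_one_lt (by norm_num : (1:ℝ) < 2)).comp
      (tendsto_add_atTop_nat 1)
  have h2 : Tendsto (fun n : ℕ => 1 / ((2:ℝ)^(n+1) - 1)) atTop (nhds 0) := by
    simpa [Pi.inv_def] using h1.inv_tendsto_atTop
  have h3 := h2.const_mul (1/2 : ℝ)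
  have : hseq = fun n : ℕ => (1/2 : ℝ) * (1 / (2^(n+1) - 1)) := rfl
  rw [this]
  simpa using h3

lemma const_zero (M : ℕ) (b : ℕ → ℝ) (C : ℝ)
    (H : ∀ n : ℕ, ∑ k ∈ range M, b k * hseq (n + k) = C) : C = 0 := by
  have h1 : Tendsto (fun n : ℕ => ∑ k ∈ range M, b k * hseq (n + k)) atTop (nhds 0) := by
    have : Tendsto (fun n : ℕ => ∑ k ∈ range M, b k * hseq (n + k)) atTop
        (nhds (∑ k ∈ range M, b k * 0)) := by
      apply tendsto_finset_sum
      intro k _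
      exact (hseq_tendsto.comp (tendsto_add_atTop_nat k)).const_mul (b k)
    simpa using this
  have h2 : Tendsto (fun _ : ℕ => C) atTop (nhds C) := tendsto_const_nhds
  have := tendsto_nhds_unique (h1.congr (fun n => (H n))) h2
  exact this.symm

lemma d_zero (M : ℕ) (c : ℕ → ℝ)
    (H0 : ∀ n : ℕ, ∑ k ∈ range M, c k * (1/2 + hseq (n + k)) = 0) :
    ∀ t : ℕ, ∑ k ∈ range M, c k * ((1:ℝ)/2)^(k*t) = 0 := by
  have expand : ∀ (b : ℕ → ℝ) (n : ℕ),
      ∑ k ∈ range M, b k * (1/2 + hseq (n + k))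
        = (1/2) * ∑ k ∈ range M, b k + ∑ k ∈ range M, b k * hseq (n + k) := by
    intro b n
    rw [Finset.mul_sum, ← Finset.sum_add_distrib]
    exact sum_congr rfl (fun k _ => by ring)
  have P : ∀ t : ℕ, ∀ n : ℕ, ∑ k ∈ range M, (c k * ((1:ℝ)/2)^(k*t)) * hseq (n+k)
      = -(1/2) * ∑ k ∈ range M, c k * ((1:ℝ)/2)^(k*t) := by
    intro t
    induction t with
    | zero =>
      intro n
      have e := expand c n
      rw [H0 n] at e
      simp only [Nat.mul_zero, pow_zero, mul_one]
      linarith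
    | succ t ih =>
      have hd : ∑ k ∈ range M, c k * ((1:ℝ)/2)^(k*t) = 0 := by
        have hC := const_zero M (fun k => c k * ((1:ℝ)/2)^(k*t)) _ ih
        linarith
      have ih0 : ∀ n, ∑ k ∈ range M, (c k * ((1:ℝ)/2)^(k*t)) * hseq (n+k) = 0 := by
        intro n; rw [ih n, hd]; ring
      intro n
      have key : ∑ k ∈ range M, (c k * ((1:ℝ)/2)^(k*(t+1))) * (1/2 + hseq (n+k)) = 0 := by
        have step : ∀ k ∈ range M, (c k * ((1:ℝ)/2)^(k*(t+1))) * (1/2 + hseq (n+k))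
            = 2^(n+1) * ((c k * ((1:ℝ)/2)^(k*t)) * hseq (n+k)) := by
          intro k _
          rw [← hseq_key (n+k)]
          have hsplit : ((1:ℝ)/2)^(k*(t+1)) = ((1:ℝ)/2)^(k*t) * ((1:ℝ)/2)^k := by
            rw [← pow_add]; ring_nf
          have hA : (2:ℝ)^(n+k+1) = 2^(n+1) * 2^k := by
            rw [← pow_add]; ring_nf
          have hB : ((1:ℝ)/2)^k * 2^k = 1 := by
            rw [← mul_pow]; norm_num
          rw [hsplit, hA]
          linear_combination (c k * ((1:ℝ)/2)^(k*t) * hseq (n+k) * 2^(n+1)) * hB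
        rw [sum_congr rfl step, ← Finset.mul_sum, ih0 n, mul_zero]
      have e := expand (fun k => c k * ((1:ℝ)/2)^(k*(t+1))) n
      rw [key] at e
      linarith
  intro t
  have hC := const_zero M (fun k => c k * ((1:ℝ)/2)^(k*t)) _ (P t)
  linarith

def IsStochastic {m : ℕ} (A : Matrix (Fin m) (Fin m) ℝ) : Prop :=
  (∀ i j, 0 ≤ A i j) ∧ ∀ i, ∑ j, A i j = 1

theorem no_finite_memory_optimal_strategy :
    ¬ ∃ (m : ℕ) (A B : Matrix (Fin m) (Fin m) ℝ) (i : Fin m) (J : Finset (Fin m)),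
      IsStochastic A ∧ IsStochastic B ∧
      ∀ n : ℕ, ∑ j ∈ J, (A ^ n * B) i j =
        (1 / 2) * (1 / (1 - 1 / 2 ^ (n + 1))) := by
  rintro ⟨m, A, B, i, J, _, _, hfg⟩
  have hmon : A.charpoly.Monic := A.charpoly_monic
  have hdeg : A.charpoly.natDegree = m := by simp [Matrix.charpoly_natDegree_eq_dim]
  set p := A.charpoly with hp
  -- the recurrence from Cayley-Hamilton
  have hrec : ∀ n : ℕ, ∑ k ∈ range (m+1), p.coeff k * (∑ j ∈ J, (A^(n+k) * B) i j) = 0 := by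
    intro n
    have h0 : A ^ n * (Polynomial.aeval A) p * B = 0 := by
      rw [hp, A.aeval_self_charpoly]
      simp
    rw [Polynomial.aeval_eq_sum_range, hdeg] at h0
    have h1 : A ^ n * (∑ k ∈ range (m+1), p.coeff k • A ^ k) * B
        = ∑ k ∈ range (m+1), p.coeff k • (A^(n+k) * B) := by
      rw [Finset.mul_sum, Finset.sum_mul]
      exact sum_congr rfl (fun k _ => by
        rw [Matrix.mul_smul, Matrix.smul_mul, pow_add])
    rw [h1] at h0
    have h2 : ∀ j, ∑ k ∈ range (m+1), p.coeff k * (A^(n+k)*B) i j = 0 := by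
      intro j
      have h3 := congrArg (fun M : Matrix (Fin m) (Fin m) ℝ => M i j) h0
      simpa [Matrix.sum_apply] using h3
    calc ∑ k ∈ range (m+1), p.coeff k * (∑ j ∈ J, (A^(n+k) * B) i j)
        = ∑ k ∈ range (m+1), ∑ j ∈ J, p.coeff k * (A^(n+k)*B) i j := by
          exact sum_congr rfl (fun k _ => Finset.mul_sum _ _ _)
      _ = ∑ j ∈ J, ∑ k ∈ range (m+1), p.coeff k * (A^(n+k)*B) i j := Finset.sum_comm
      _ = 0 := by
          apply Finset.sum_eq_zero
          intro j _
          exact h2 j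
  have H0 : ∀ n : ℕ, ∑ k ∈ range (m+1), p.coeff k * (1/2 + hseq (n + k)) = 0 := by
    intro n
    rw [← hrec n]
    exact sum_congr rfl (fun k _ => by rw [hfg (n+k), g_eq (n+k)])
  have hd := d_zero (m+1) p.coeff H0
  have hroot : ∀ t : ℕ, p.IsRoot (((1:ℝ)/2)^t) := by
    intro t
    have h := hd t
    rw [IsRoot.def, Polynomial.eval_eq_sum_range, hdeg]
    rw [← h]
    exact sum_congr rfl (fun k _ => by rw [← pow_mul, Nat.mul_comm])
  have hinf : {x : ℝ | p.IsRoot x}.Infinite := by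
    apply Set.infinite_of_injective_forall_mem
      (f := fun t : ℕ => ((1:ℝ)/2)^t)
    · have : StrictAnti (fun t : ℕ => ((1:ℝ)/2)^t) :=
        pow_right_strictAnti₀ (by norm_num) (by norm_num)
      exact this.injective
    · exact hroot
  have hpz : p = 0 := Polynomial.eq_zero_of_infinite_isRoot p hinf
  exact hmon.ne_zero hpz
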